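/- Let q ≥ 1 be a natural number, let y be an integer with 0 < y < q, let m ≥ 1, let λ_1, …, λ_m ∈ {−1, 1}, and let 0 < x_1 < x_2 < … < x_m be integers such that x_i + y < x_{i+1} for 1 ≤ i < m and x_m + y − x_1 ≤ q. Then for every f ∈ F_{A,B}(q) one has |∑_{i=1}^{m} λ_i·S(x_i, y)| ≤ y·√(B·q·m). -/

import Mathlib

open Finset

/-- `f` belongs to the class `F_{A,B}(q)`: it is bounded by `A`, periodic with period `q`,
and satisfies `∑_{n=1}^{q} |∑_{k=1}^{K} f(n+k)|² ≤ B·q·K` for every natural `K ≥ 1`. -/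
def MemF (A B : ℝ) (q : ℕ) (f : ℤ → ℂ) : Prop :=
  (∀ n : ℤ, ‖f n‖ ≤ A) ∧
  (∀ n : ℤ, f (n + (q : ℤ)) = f n) ∧
  (∀ K : ℕ, 1 ≤ K →
    ∑ n ∈ Finset.Icc (1 : ℤ) (q : ℤ),
      (‖∑ k ∈ Finset.Icc (1 : ℤ) (K : ℤ), f (n + k)‖) ^ 2 ≤ B * q * K)

/-- Square sum `S(x,y) = ∑_{i=x+1}^{x+y} ∑_{j=0}^{y-1} f(i+j)`. -/
noncomputable def Sq (f : ℤ → ℂ) (x y : ℤ) : ℂ :=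
  ∑ i ∈ Finset.Icc (x + 1) (x + y), ∑ j ∈ Finset.Icc 0 (y - 1), f (i + j)

private lemma periodic_sum_shift (q : ℕ) (hq : 1 ≤ q) (h : ℤ → ℝ)
    (hp : ∀ n : ℤ, h (n + (q : ℤ)) = h n) (a : ℤ) :
    ∑ n ∈ Finset.Icc a (a + q - 1), h n = ∑ r ∈ Finset.Ico (0 : ℤ) (q : ℤ), h r := by
  have hq0 : (0 : ℤ) < (q : ℤ) := by exact_mod_cast hq
  have hnat : ∀ (k : ℕ) (n : ℤ), h (n + (k : ℤ) * q) = h n := by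
    intro k
    induction k with
    | zero => simp
    | succ k ih =>
      intro n
      push_cast
      rw [show n + ((k : ℤ) + 1) * q = n + (k : ℤ) * q + q by ring]
      rw [hp (n + (k : ℤ) * q)]
      exact ih n
  have hmul : ∀ k : ℤ, ∀ n : ℤ, h (n + k * q) = h n := by
    intro k n
    rcases le_or_gt 0 k with hk | hk
    · obtain ⟨j, rfl⟩ := Int.eq_ofNat_of_zero_le hk
      exact hnat j n
    · have h2 := hnat (-k).toNat (n + k * q)
      rw [show (((-k).toNat : ℤ)) = -k from Int.toNat_of_nonneg (by omega)] at h2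
      rw [show n + k * q + -k * q = n by ring] at h2
      exact h2.symm
  have hmod : ∀ n : ℤ, h n = h (n % q) := by
    intro n
    have h2 := hmul (n / q) (n % q)
    rw [show n % (q : ℤ) + n / q * q = n from by
      rw [mul_comm]; exact Int.emod_add_mul_ediv n q] at h2
    exact h2
  have hinj : ∀ n₁ ∈ Finset.Icc a (a + q - 1), ∀ n₂ ∈ Finset.Icc a (a + q - 1),
      n₁ % q = n₂ % q → n₁ = n₂ := by
    intro n₁ h₁ n₂ h₂ he
    simp only [Finset.mem_Icc] at h₁ h₂
    have hd : (q : ℤ) ∣ n₁ - n₂ := Int.dvd_of_emod_eq_zero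
      (by rw [Int.sub_emod, he]; simp)
    have := Int.eq_zero_of_abs_lt_dvd hd (by rw [abs_lt]; omega)
    omega
  have himg : (Finset.Icc a (a + q - 1)).image (· % (q : ℤ)) = Finset.Ico (0 : ℤ) q := by
    apply Finset.eq_of_subset_of_card_le
    · intro r hr
      simp only [Finset.mem_image] at hr
      obtain ⟨n, _, rfl⟩ := hr
      simp only [Finset.mem_Ico]
      exact ⟨Int.emod_nonneg n (by omega), Int.emod_lt_of_pos n hq0⟩
    · rw [Finset.card_image_of_injOn (fun n₁ h₁ n₂ h₂ => hinj n₁ h₁ n₂ h₂)]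
      rw [Int.card_Icc, Int.card_Ico]
      omega
  calc ∑ n ∈ Finset.Icc a (a + q - 1), h n
      = ∑ n ∈ Finset.Icc a (a + q - 1), h (n % q) := Finset.sum_congr rfl fun n _ => hmod n
    _ = ∑ r ∈ (Finset.Icc a (a + q - 1)).image (· % (q : ℤ)), h r :=
        (Finset.sum_image hinj).symm
    _ = ∑ r ∈ Finset.Ico (0 : ℤ) q, h r := by rw [himg]

private lemma Sq_eq (f : ℤ → ℂ) (x y : ℤ) :
    Sq f x y = ∑ n ∈ Finset.Icc x (x + y - 1), ∑ k ∈ Finset.Icc (1 : ℤ) y, f (n + k) := by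
  unfold Sq
  rw [show Finset.Icc x (x + y - 1) = (Finset.Icc (x + 1) (x + y)).image (· + (-1)) from by
    rw [Finset.image_add_right_Icc]; congr 1 <;> ring]
  rw [Finset.sum_image (by intro a _ b _ hab; exact add_right_cancel hab)]
  refine Finset.sum_congr rfl fun i _ => ?_
  rw [show Finset.Icc (1 : ℤ) y = (Finset.Icc (0 : ℤ) (y - 1)).image (· + 1) from by
    rw [Finset.image_add_right_Icc]; congr 1; ring]
  rw [Finset.sum_image (by intro a _ b _ hab; exact add_right_cancel hab)]
  refine Finset.sum_congr rfl fun j _ => ?_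
  congr 1; ring

/-- **Lemma 5**. Let `0 < y < q`, `λ_i ∈ {−1,1}`, and `0 < x_1 < … < x_m` with
`x_i + y < x_{i+1}` for `1 ≤ i < m` and `x_m + y − x_1 ≤ q`. Then for `f ∈ F_{A,B}(q)`:
`|∑_{i=1}^{m} λ_i·S(x_i, y)| ≤ y·√(B·q·m)`. -/
theorem sum_of_squares_bound (A B : ℝ) (hA : 0 < A) (hB : 0 < B) (q : ℕ) (hq1 : 1 ≤ q)
    (f : ℤ → ℂ) (hf : MemF A B q f) (y : ℤ) (hy0 : 0 < y) (hyq : y < (q : ℤ))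
    (m : ℕ) (hm : 1 ≤ m) (lam : ℕ → ℤ) (hlam : ∀ i, lam i = 1 ∨ lam i = -1)
    (x : ℕ → ℤ) (hx1 : 0 < x 1)
    (hmono : ∀ i, 1 ≤ i → i < m → x i + y < x (i + 1))
    (hlast : x m + y - x 1 ≤ (q : ℤ)) :
    ‖∑ i ∈ Finset.Icc 1 m, (lam i : ℂ) * Sq f (x i) y‖ ≤
      (y : ℝ) * Real.sqrt (B * q * m) := by
  obtain ⟨hbd, hper, hK⟩ := hf
  set g : ℤ → ℝ := fun n => ‖∑ k ∈ Finset.Icc (1 : ℤ) y, f (n + k)‖ with hg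
  have hg0 : ∀ n, 0 ≤ g n := fun n => norm_nonneg _
  -- strong monotonicity
  have hmono' : ∀ j i, 1 ≤ i → i < j → j ≤ m → x i + y < x j := by
    intro j
    induction j with
    | zero => omega
    | succ j ih =>
      intro i hi hij hjm
      rcases eq_or_lt_of_le (Nat.lt_succ_iff.mp hij) with hcase | hcase
      · subst hcase; exact hmono i hi (by omega)
      · have h1 := ih i hi hcase (by omega)
        have h2 := hmono j (by omega) (by omega)
        omega
  have hbetween : ∀ i, 1 ≤ i → i ≤ m → x 1 ≤ x i ∧ x i ≤ x m := by
    intro i hi him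
    constructor
    · rcases eq_or_lt_of_le hi with hc | hc
      · subst hc; exact le_rfl
      · have := hmono' i 1 le_rfl hc him; omega
    · rcases eq_or_lt_of_le him with hc | hc
      · subst hc; exact le_rfl
      · have := hmono' m i hi hc le_rfl; omega
  set I : ℕ → Finset ℤ := fun i => Finset.Icc (x i) (x i + y - 1) with hI
  have hdisj : ∀ i ∈ Finset.Icc 1 m, ∀ j ∈ Finset.Icc 1 m, i ≠ j → Disjoint (I i) (I j) := by
    intro i hi j hj hij
    simp only [Finset.mem_Icc] at hi hj
    rw [Finset.disjoint_left]
    intro n hni hnj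
    simp only [hI, Finset.mem_Icc] at hni hnj
    rcases lt_or_gt_of_ne hij with hc | hc
    · have := hmono' j i hi.1 hc hj.2; omega
    · have := hmono' i j hj.1 hc hi.2; omega
  set U : Finset ℤ := (Finset.Icc 1 m).biUnion I with hU
  -- Step A
  have hcardI : ∀ i, (I i).card = y.toNat := by
    intro i; rw [hI]; simp only; rw [Int.card_Icc]; omega
  have stepA : ‖∑ i ∈ Finset.Icc 1 m, (lam i : ℂ) * Sq f (x i) y‖
      ≤ ∑ n ∈ U, g n := by
    calc ‖∑ i ∈ Finset.Icc 1 m, (lam i : ℂ) * Sq f (x i) y‖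
        ≤ ∑ i ∈ Finset.Icc 1 m, ‖(lam i : ℂ) * Sq f (x i) y‖ :=
          norm_sum_le _ _
      _ ≤ ∑ i ∈ Finset.Icc 1 m, ∑ n ∈ I i, g n := by
          apply Finset.sum_le_sum
          intro i _
          rw [norm_mul]
          have hl : ‖((lam i : ℤ) : ℂ)‖ = 1 := by
            rcases hlam i with hc | hc <;> rw [hc] <;> simp
          rw [hl, one_mul, Sq_eq]
          exact norm_sum_le _ _
      _ = ∑ n ∈ U, g n := (Finset.sum_biUnion hdisj).symm
  -- Step B : L² bound
  have hsubU : U ⊆ Finset.Icc (x 1) (x 1 + q - 1) := by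
    intro n hn
    rw [hU, Finset.mem_biUnion] at hn
    obtain ⟨i, hi, hni⟩ := hn
    simp only [Finset.mem_Icc] at hi
    simp only [hI, Finset.mem_Icc] at hni
    have hb := hbetween i hi.1 hi.2
    simp only [Finset.mem_Icc]
    omega
  have hperg : ∀ n : ℤ, g (n + q) ^ 2 = g n ^ 2 := by
    intro n
    have : (∑ k ∈ Finset.Icc (1 : ℤ) y, f (n + q + k)) =
        ∑ k ∈ Finset.Icc (1 : ℤ) y, f (n + k) := by
      refine Finset.sum_congr rfl fun k _ => ?_
      rw [show n + (q : ℤ) + k = n + k + q by ring]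
      exact hper (n + k)
    simp only [hg, this]
  have hyt : ((y.toNat : ℤ)) = y := Int.toNat_of_nonneg hy0.le
  have hsum2 : ∑ n ∈ U, g n ^ 2 ≤ B * q * y := by
    calc ∑ n ∈ U, g n ^ 2 ≤ ∑ n ∈ Finset.Icc (x 1) (x 1 + q - 1), g n ^ 2 :=
          Finset.sum_le_sum_of_subset_of_nonneg hsubU (fun n _ _ => sq_nonneg _)
      _ = ∑ r ∈ Finset.Ico (0 : ℤ) q, g r ^ 2 :=
          periodic_sum_shift q hq1 (fun n => g n ^ 2) hperg _
      _ = ∑ n ∈ Finset.Icc (1 : ℤ) q, g n ^ 2 := by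
          rw [show Finset.Icc (1 : ℤ) (q : ℤ) = Finset.Icc (1 : ℤ) (1 + (q : ℤ) - 1) from by congr 1; ring,
            periodic_sum_shift q hq1 (fun n => g n ^ 2) hperg 1]
      _ ≤ B * q * y := by
          have h1 : 1 ≤ y.toNat := by omega
          have h2 := hK y.toNat h1
          rw [hyt] at h2
          have hytR : ((y.toNat : ℝ)) = ((y : ℤ) : ℝ) := by exact_mod_cast hyt
          rw [hytR] at h2
          exact h2
  have hytR : ((y.toNat : ℝ)) = ((y : ℤ) : ℝ) := by exact_mod_cast hyt
  have hcardU : (U.card : ℝ) = (m : ℝ) * y := by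
    have hc1 : U.card = m * y.toNat := by
      rw [hU, Finset.card_biUnion hdisj]
      rw [Finset.sum_congr rfl (fun i _ => hcardI i), Finset.sum_const, smul_eq_mul,
        Nat.card_Icc]
      congr 1
    rw [hc1]
    push_cast
    rw [hytR]
  -- Cauchy–Schwarz
  have hCS : (∑ n ∈ U, g n) ^ 2 ≤ (y : ℝ) ^ 2 * (B * q * m) := by
    calc (∑ n ∈ U, g n) ^ 2 ≤ U.card * ∑ n ∈ U, g n ^ 2 := sq_sum_le_card_mul_sum_sq
      _ ≤ ((m : ℝ) * y) * (B * q * y) := by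
          rw [hcardU]
          apply mul_le_mul_of_nonneg_left hsum2
          positivity
      _ = (y : ℝ) ^ 2 * (B * q * m) := by ring
  have hy0' : (0 : ℝ) < (y : ℝ) := by exact_mod_cast hy0
  have hfin : ∑ n ∈ U, g n ≤ (y : ℝ) * Real.sqrt (B * q * m) := by
    have h2 : ∑ n ∈ U, g n ≤ Real.sqrt ((y : ℝ) ^ 2 * (B * q * m)) :=
      Real.le_sqrt_of_sq_le hCS
    rwa [Real.sqrt_mul (sq_nonneg _), Real.sqrt_sq hy0'.le] at h2
  exact stepA.trans hfin
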